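/- arXiv:2212.07263 — 2 statements merged into one kernel-verified Lean document; each statement's English description precedes it below -/
import Mathlib

section
/- Let d ≥ 1 and κ₃, κ₄ : Fin d → ℝ. Let v₃ be the real matrix with rows indexed by functions Fin 2 → Fin d and columns by Fin d whose (f, m) entry is κ₃(m) if f is constantly m and 0 otherwise, and let v₄ be the real matrix with rows indexed by functions Fin 3 → Fin d and columns by Fin d whose (f, m) entry is κ₄(m) if f is constantly m and 0 otherwise. Then the vertically stacked matrix [v₃; v₄] (rows indexed by the sum type) has rank equal to the number of indices m with κ₃(m) ≠ 0 or κ₄(m) ≠ 0. -/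
open Matrix

/-- The vertically stacked matrix `[v₃; v₄]` of third- and fourth-order cumulant
matrices has rank equal to the number of indices `m` with `κ₃ m ≠ 0` or `κ₄ m ≠ 0`. -/
theorem stmt_9 (d : ℕ) (hd : 1 ≤ d) (κ₃ κ₄ : Fin d → ℝ) :
    (Matrix.fromRows
        (Matrix.of fun (f : Fin 2 → Fin d) (m : Fin d) =>
          if f = Function.const (Fin 2) m then κ₃ m else 0)
        (Matrix.of fun (f : Fin 3 → Fin d) (m : Fin d) =>
          if f = Function.const (Fin 3) m then κ₄ m else 0)).rank =
      (Finset.univ.filter fun m : Fin d => κ₃ m ≠ 0 ∨ κ₄ m ≠ 0).card := by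
  classical
  set M : Matrix ((Fin 2 → Fin d) ⊕ (Fin 3 → Fin d)) (Fin d) ℝ :=
    Matrix.fromRows
      (Matrix.of fun (f : Fin 2 → Fin d) (m : Fin d) =>
        if f = Function.const (Fin 2) m then κ₃ m else 0)
      (Matrix.of fun (f : Fin 3 → Fin d) (m : Fin d) =>
        if f = Function.const (Fin 3) m then κ₄ m else 0) with hM
  set S : Finset (Fin d) := Finset.univ.filter fun m => κ₃ m ≠ 0 ∨ κ₄ m ≠ 0 with hS
  have hconst2 : ∀ m i : Fin d, Function.const (Fin 2) m = Function.const (Fin 2) i ↔ m = i := by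
    intro m i
    exact ⟨fun h => congrFun h 0, fun h => by rw [h]⟩
  have hconst3 : ∀ m i : Fin d, Function.const (Fin 3) m = Function.const (Fin 3) i ↔ m = i := by
    intro m i
    exact ⟨fun h => congrFun h 0, fun h => by rw [h]⟩
  have hli : LinearIndependent ℝ (fun i : S => M.transpose i) := by
    rw [Fintype.linearIndependent_iff]
    intro c hc i
    obtain ⟨m, hm⟩ := i
    have hm' := (Finset.mem_filter.mp hm).2
    have key3 : c ⟨m, hm⟩ * κ₃ m = 0 := by
      have h := congrFun hc (Sum.inl (Function.const (Fin 2) m))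
      simp only [Finset.sum_apply, Pi.smul_apply, smul_eq_mul, Pi.zero_apply,
        Matrix.transpose_apply, hM, Matrix.fromRows_apply_inl, Matrix.of_apply] at h
      rw [Finset.sum_eq_single (⟨m, hm⟩ : S)] at h
      · simpa using h
      · rintro ⟨b, hb⟩ _ hbm
        have : Function.const (Fin 2) m ≠ Function.const (Fin 2) b := by
          rw [Ne, hconst2]
          intro h'
          exact hbm (by simp [h'])
        simp [this]
      · intro h'; exact absurd (Finset.mem_univ _) h'
    have key4 : c ⟨m, hm⟩ * κ₄ m = 0 := by
      have h := congrFun hc (Sum.inr (Function.const (Fin 3) m))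
      simp only [Finset.sum_apply, Pi.smul_apply, smul_eq_mul, Pi.zero_apply,
        Matrix.transpose_apply, hM, Matrix.fromRows_apply_inr, Matrix.of_apply] at h
      rw [Finset.sum_eq_single (⟨m, hm⟩ : S)] at h
      · simpa using h
      · rintro ⟨b, hb⟩ _ hbm
        have : Function.const (Fin 3) m ≠ Function.const (Fin 3) b := by
          rw [Ne, hconst3]
          intro h'
          exact hbm (by simp [h'])
        simp [this]
      · intro h'; exact absurd (Finset.mem_univ _) h'
    rcases hm' with h3 | h4
    · exact (mul_eq_zero.mp key3).resolve_right h3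
    · exact (mul_eq_zero.mp key4).resolve_right h4
  have hspan : Submodule.span ℝ (Set.range M.transpose) =
      Submodule.span ℝ (Set.range (fun i : S => M.transpose i)) := by
    apply le_antisymm
    · rw [Submodule.span_le]
      rintro _ ⟨m, rfl⟩
      by_cases hm : m ∈ S
      · exact Submodule.subset_span ⟨⟨m, hm⟩, rfl⟩
      · have hm0 : κ₃ m = 0 ∧ κ₄ m = 0 := by
          rw [hS, Finset.mem_filter] at hm
          push_neg at hm
          exact hm (Finset.mem_univ _)
        have : M.transpose m = 0 := by
          funext r
          rcases r with f | f
          · simp [hM, hm0.1]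
          · simp [hM, hm0.2]
        rw [this]
        exact Submodule.zero_mem _
    · rw [Submodule.span_le]
      rintro _ ⟨i, rfl⟩
      exact Submodule.subset_span ⟨i, rfl⟩
  rw [Matrix.rank, Matrix.range_mulVecLin]
  change Module.finrank ℝ (Submodule.span ℝ (Set.range M.transpose)) = S.card
  rw [hspan, finrank_span_eq_card hli, Fintype.card_coe]
end

section
/- Let d ≥ 1, κ₃, κ₄ : Fin d → ℝ, and let v₃ (rows indexed by Fin 2 → Fin d) and v₄ (rows indexed by Fin 3 → Fin d) be the real matrices with columns indexed by Fin d whose (f, m) entries are κ₃(m), respectively κ₄(m), if f is constantly m and 0 otherwise. Let Ω be a real symmetric positive definite d × d matrix with Kronecker powers Ω^{⊗2} and Ω^{⊗3} (entry (f,g) equal to the product over j of Ω(f(j), g(j))), and let D be an invertible complex d × d matrix. Then the vertically stacked complex matrix [D · (v₃ᵀ Ω^{⊗2} v₃) · Dᴴ ; D · (v₄ᵀ Ω^{⊗3} v₄) · Dᴴ] (the real inner matrices viewed as complex) has rank equal to the number of indices m with κ₃(m) ≠ 0 or κ₄(m) ≠ 0. -/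
open Matrix

namespace Stmt15Aux

variable {d : ℕ} {ι : Type*} [Fintype ι]

/-- The `ι`-fold tensor (Kronecker) power of a `d × d` matrix. -/
def tp (ι : Type*) [Fintype ι] {d : ℕ} {α : Type*} [CommRing α]
    (M : Matrix (Fin d) (Fin d) α) : Matrix (ι → Fin d) (ι → Fin d) α :=
  Matrix.of fun f g => ∏ j, M (f j) (g j)

variable {α : Type*} [CommRing α] [DecidableEq ι]

lemma tp_mul (M N : Matrix (Fin d) (Fin d) α) : tp ι M * tp ι N = tp ι (M * N) := by
  ext f g
  simp only [tp, mul_apply, of_apply, ← Finset.prod_mul_distrib]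
  rw [show (∏ j, (∑ a, M (f j) a * N a (g j))) =
      ∑ h ∈ Fintype.piFinset (fun _ : ι => (Finset.univ : Finset (Fin d))),
        ∏ j, M (f j) (h j) * N (h j) (g j) from
    Finset.prod_univ_sum _ _, Fintype.piFinset_univ]

lemma tp_one : tp ι (1 : Matrix (Fin d) (Fin d) α) = 1 := by
  ext f g
  simp only [tp, of_apply, one_apply]
  rw [Finset.prod_boole]
  simp [funext_iff]

lemma tp_isUnit {M : Matrix (Fin d) (Fin d) α} (hM : IsUnit M) : IsUnit (tp ι M) := by
  obtain ⟨u, rfl⟩ := hM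
  refine isUnit_iff_exists.2 ⟨tp ι (↑u⁻¹), ?_, ?_⟩ <;>
    rw [tp_mul] <;> simp [tp_one]

lemma tp_map {β : Type*} [CommRing β] (f : α →+* β) (M : Matrix (Fin d) (Fin d) α) :
    (tp ι M).map f = tp ι (M.map f) := by
  ext g h
  simp [tp, map_prod]

open scoped ComplexOrder MatrixOrder in
/-- definiteness of the complexified tensor power of a real positive definite matrix -/
lemma tp_def {Ω : Matrix (Fin d) (Fin d) ℝ} (hΩ : Ω.PosDef) (x : (ι → Fin d) → ℂ)
    (hx : star x ⬝ᵥ ((tp ι Ω).map Complex.ofReal *ᵥ x) = 0) : x = 0 := by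
  classical
  set B := CFC.sqrt Ω with hBdef
  have hB2 : B * B = Ω := CFC.sqrt_mul_sqrt_self Ω hΩ.posSemidef.nonneg
  have hBH : Bᴴ = B := (CFC.sqrt_nonneg Ω).posSemidef.1
  have hBunit : IsUnit B := by
    rw [isUnit_iff_isUnit_det]
    have : B.det * B.det = Ω.det := by rw [← det_mul, hB2]
    have hΩdet : IsUnit Ω.det := hΩ.det_pos.ne'.isUnit
    exact isUnit_of_mul_isUnit_left (this ▸ hΩdet)
  set Bc : Matrix (Fin d) (Fin d) ℂ := B.map Complex.ofReal with hBc
  have hBcunit : IsUnit Bc := hBunit.map (Complex.ofRealHom.mapMatrix : Matrix (Fin d) (Fin d) ℝ →+* Matrix (Fin d) (Fin d) ℂ)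
  set R : Matrix (ι → Fin d) (ι → Fin d) ℂ := tp ι Bc with hR
  have hRH : Rᴴ = R := by
    ext f g
    simp only [hR, tp, conjTranspose_apply, of_apply, star_prod, hBc, map_apply]
    rw [show (∏ j, star ((B (g j) (f j) : ℝ) : ℂ)) = ∏ j, ((B (f j) (g j) : ℝ) : ℂ) from
      Finset.prod_congr rfl fun j _ => by
        rw [RCLike.star_def, Complex.conj_ofReal]
        congr 1
        conv_lhs => rw [← hBH]
        rfl]
  have hQ : (tp ι Ω).map Complex.ofReal = Rᴴ * R := by
    rw [hRH, hR, tp_mul, hBc]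
    rw [show Bc * Bc = Ω.map Complex.ofReal by
      rw [hBc, ← hB2]; exact (Matrix.map_mul (f := Complex.ofRealHom)).symm]
    exact tp_map Complex.ofRealHom Ω
  rw [hQ, ← mulVec_mulVec, dotProduct_mulVec, ← star_mulVec,
    dotProduct_star_self_eq_zero] at hx
  have hRunit : IsUnit R := tp_isUnit hBcunit
  have hinj : Function.Injective R.mulVec := mulVec_injective_iff_isUnit.2 hRunit
  have := hinj (by rw [hx, mulVec_zero] : R *ᵥ x = R *ᵥ 0)
  exact this

/-- the selection matrix -/
def Vk (ι : Type*) [Fintype ι] [DecidableEq ι] {d : ℕ} (κ : Fin d → ℝ) : Matrix (ι → Fin d) (Fin d) ℝ :=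
  Matrix.of fun f m => if f = Function.const ι m then κ m else 0

variable [Nonempty ι]

lemma W_mulVec_const (κ : Fin d → ℝ) (u : Fin d → ℂ) (m : Fin d) :
    (((Vk ι κ).map Complex.ofReal) *ᵥ u) (Function.const ι m) = (κ m : ℂ) * u m := by
  classical
  simp only [mulVec, dotProduct, Vk, map_apply, of_apply, apply_ite Complex.ofReal,
    Complex.ofReal_zero]
  rw [Finset.sum_eq_single m]
  · rw [if_pos rfl]
  · intro b _ hb
    rw [if_neg, zero_mul]
    exact fun hc => hb (Function.const_injective hc).symm
  · exact fun h => absurd (Finset.mem_univ m) h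

lemma W_mulVec_zero (κ : Fin d → ℝ) (u : Fin d → ℂ) (hu : ∀ m, κ m ≠ 0 → u m = 0) :
    ((Vk ι κ).map Complex.ofReal) *ᵥ u = 0 := by
  classical
  funext f
  simp only [mulVec, dotProduct, Vk, map_apply, of_apply, apply_ite Complex.ofReal,
    Complex.ofReal_zero, Pi.zero_apply]
  apply Finset.sum_eq_zero
  intro n _
  by_cases hf : f = Function.const ι n
  · rw [if_pos hf]
    by_cases hk : κ n = 0
    · simp [hk]
    · simp [hu n hk]
  · rw [if_neg hf, zero_mul]

lemma M_decomp (κ : Fin d → ℝ) (Ω : Matrix (Fin d) (Fin d) ℝ) :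
    ((Vk ι κ)ᵀ * tp ι Ω * Vk ι κ).map Complex.ofReal =
      ((Vk ι κ).map Complex.ofReal)ᵀ * (tp ι Ω).map Complex.ofReal *
        ((Vk ι κ).map Complex.ofReal) := by
  rw [show (Complex.ofReal : ℝ → ℂ) = ⇑Complex.ofRealHom from rfl,
    Matrix.map_mul (f := Complex.ofRealHom), Matrix.map_mul (f := Complex.ofRealHom),
    transpose_map]

lemma WT_conj (κ : Fin d → ℝ) :
    ((Vk ι κ).map Complex.ofReal)ᴴ = ((Vk ι κ).map Complex.ofReal)ᵀ := by
  ext f g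
  simp [conjTranspose_apply, map_apply, Complex.conj_ofReal]

open scoped ComplexOrder in
lemma keyB [DecidableEq ι] {Ω : Matrix (Fin d) (Fin d) ℝ} (hΩ : Ω.PosDef) (κ : Fin d → ℝ)
    (u : Fin d → ℂ)
    (h : (((Vk ι κ)ᵀ * tp ι Ω * Vk ι κ).map Complex.ofReal) *ᵥ u = 0)
    {m : Fin d} (hκ : κ m ≠ 0) : u m = 0 := by
  classical
  set W : Matrix (ι → Fin d) (Fin d) ℂ := (Vk ι κ).map Complex.ofReal with hW
  rw [M_decomp] at h
  have h2 : star u ⬝ᵥ ((Wᵀ * (tp ι Ω).map Complex.ofReal * W) *ᵥ u) = 0 := by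
    rw [h, dotProduct_zero]
  rw [← mulVec_mulVec, ← mulVec_mulVec, dotProduct_mulVec, ← WT_conj, ← star_mulVec] at h2
  have hz : W *ᵥ u = 0 := tp_def hΩ _ h2
  have := congrFun hz (Function.const ι m)
  rw [W_mulVec_const] at this
  simp only [Pi.zero_apply] at this
  rcases mul_eq_zero.mp this with h' | h'
  · exact absurd (Complex.ofReal_eq_zero.mp h') hκ
  · exact h'

lemma keyA (κ : Fin d → ℝ) (Ω : Matrix (Fin d) (Fin d) ℝ) (u : Fin d → ℂ)
    (hu : ∀ m, κ m ≠ 0 → u m = 0) :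
    (((Vk ι κ)ᵀ * tp ι Ω * Vk ι κ).map Complex.ofReal) *ᵥ u = 0 := by
  rw [M_decomp, ← mulVec_mulVec, W_mulVec_zero κ u hu, mulVec_zero]

end Stmt15Aux


open Stmt15Aux in
/-- Third claim of Proposition 1: the vertically stacked matrix
`[D (v₃ᵀ Ω^{⊗2} v₃) Dᴴ ; D (v₄ᵀ Ω^{⊗3} v₄) Dᴴ]`, with `Ω` symmetric positive definite
and `D` invertible complex, has rank equal to the number of indices `m` with
`κ₃ m ≠ 0` or `κ₄ m ≠ 0`. -/
theorem stmt_15 (d : ℕ) (hd : 1 ≤ d) (κ₃ κ₄ : Fin d → ℝ)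
    (Ω : Matrix (Fin d) (Fin d) ℝ) (hΩ : Ω.PosDef)
    (D : Matrix (Fin d) (Fin d) ℂ) (hD : IsUnit D) :
    (Matrix.fromRows
        (D *
          ((Matrix.of fun (f : Fin 2 → Fin d) (m : Fin d) =>
                if f = Function.const (Fin 2) m then κ₃ m else 0)ᵀ *
              (Matrix.of fun f g : Fin 2 → Fin d => ∏ j, Ω (f j) (g j)) *
              (Matrix.of fun (f : Fin 2 → Fin d) (m : Fin d) =>
                if f = Function.const (Fin 2) m then κ₃ m else 0)).map
            Complex.ofReal *
          Dᴴ)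
        (D *
          ((Matrix.of fun (f : Fin 3 → Fin d) (m : Fin d) =>
                if f = Function.const (Fin 3) m then κ₄ m else 0)ᵀ *
              (Matrix.of fun f g : Fin 3 → Fin d => ∏ j, Ω (f j) (g j)) *
              (Matrix.of fun (f : Fin 3 → Fin d) (m : Fin d) =>
                if f = Function.const (Fin 3) m then κ₄ m else 0)).map
            Complex.ofReal *
          Dᴴ)).rank =
      (Finset.univ.filter fun m : Fin d => κ₃ m ≠ 0 ∨ κ₄ m ≠ 0).card := by

  have e₃ : (Matrix.of fun (f : Fin 2 → Fin d) (m : Fin d) =>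
      if f = Function.const (Fin 2) m then κ₃ m else 0) = Vk (Fin 2) κ₃ := rfl
  have e₄ : (Matrix.of fun (f : Fin 3 → Fin d) (m : Fin d) =>
      if f = Function.const (Fin 3) m then κ₄ m else 0) = Vk (Fin 3) κ₄ := rfl
  have eQ₂ : (Matrix.of fun f g : Fin 2 → Fin d => ∏ j, Ω (f j) (g j)) = tp (Fin 2) Ω := rfl
  have eQ₃ : (Matrix.of fun f g : Fin 3 → Fin d => ∏ j, Ω (f j) (g j)) = tp (Fin 3) Ω := rfl
  rw [e₃, e₄, eQ₂, eQ₃]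
  set M₃ : Matrix (Fin d) (Fin d) ℂ :=
    ((Vk (Fin 2) κ₃)ᵀ * tp (Fin 2) Ω * Vk (Fin 2) κ₃).map Complex.ofReal with hM₃
  set M₄ : Matrix (Fin d) (Fin d) ℂ :=
    ((Vk (Fin 3) κ₄)ᵀ * tp (Fin 3) Ω * Vk (Fin 3) κ₄).map Complex.ofReal with hM₄
  set p : Fin d → Prop := fun m => κ₃ m ≠ 0 ∨ κ₄ m ≠ 0 with hp
  classical
  -- units
  have hDdet := (isUnit_iff_isUnit_det D).mp hD
  have hDH : IsUnit Dᴴ := (isUnit_iff_isUnit_det Dᴴ).mpr (by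
    rw [det_conjTranspose]; exact hDdet.star)
  -- the kernel submodule
  set φ : (Fin d → ℂ) →ₗ[ℂ] ({m : Fin d // p m} → ℂ) :=
    LinearMap.funLeft ℂ ℂ (Subtype.val) with hφ
  set K := LinearMap.ker φ with hK
  have hKmem : ∀ w : Fin d → ℂ, w ∈ K ↔ ∀ m, p m → w m = 0 := by
    intro w
    rw [hK, LinearMap.mem_ker]
    constructor
    · intro h m hm; exact congrFun h ⟨m, hm⟩
    · intro h; funext t; exact h t.1 t.2
  have hcard : Module.finrank ℂ K + (Finset.univ.filter p).card = d := by
    have h1 := LinearMap.finrank_range_add_finrank_ker φ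
    rw [LinearMap.range_eq_top.mpr
        (LinearMap.funLeft_surjective_of_injective ℂ ℂ _ Subtype.val_injective)] at h1
    rw [finrank_top, Module.finrank_pi, Module.finrank_pi, Fintype.card_subtype,
      Fintype.card_fin, ← hK] at h1
    simp only [hp, Finset.filter_congr_decidable] at h1 ⊢
    omega
  -- the linear equivalence given by Dᴴ
  have hinj : Function.Injective (Dᴴ.mulVecLin) := by
    rw [coe_mulVecLin]
    exact mulVec_injective_iff_isUnit.mpr hDH
  have hsurj : Function.Surjective (Dᴴ.mulVecLin) := by
    rw [coe_mulVecLin]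
    exact mulVec_surjective_iff_isUnit.mpr hDH
  set e : (Fin d → ℂ) ≃ₗ[ℂ] (Fin d → ℂ) :=
    LinearEquiv.ofBijective Dᴴ.mulVecLin ⟨hinj, hsurj⟩ with he
  have hDinj : Function.Injective D.mulVec := mulVec_injective_iff_isUnit.mpr hD
  have hker : LinearMap.ker (Matrix.fromRows (D * M₃ * Dᴴ) (D * M₄ * Dᴴ)).mulVecLin
      = Submodule.comap (e : (Fin d → ℂ) →ₗ[ℂ] (Fin d → ℂ)) K := by
    ext w
    rw [LinearMap.mem_ker, Submodule.mem_comap]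
    have hew : (e : (Fin d → ℂ) →ₗ[ℂ] (Fin d → ℂ)) w = Dᴴ *ᵥ w := rfl
    rw [hew, hKmem, mulVecLin_apply, fromRows_mulVec]
    constructor
    · intro h
      have h₃ : M₃ *ᵥ (Dᴴ *ᵥ w) = 0 := by
        apply hDinj
        rw [mulVec_zero, mulVec_mulVec, mulVec_mulVec]
        exact funext fun i => congrFun h (Sum.inl i)
      have h₄ : M₄ *ᵥ (Dᴴ *ᵥ w) = 0 := by
        apply hDinj
        rw [mulVec_zero, mulVec_mulVec, mulVec_mulVec]
        exact funext fun i => congrFun h (Sum.inr i)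
      intro m hm
      rcases hm with hκ | hκ
      · exact keyB hΩ κ₃ _ h₃ hκ
      · exact keyB hΩ κ₄ _ h₄ hκ
    · intro h
      have h₃ : M₃ *ᵥ (Dᴴ *ᵥ w) = 0 := keyA κ₃ Ω _ (fun m hm => h m (Or.inl hm))
      have h₄ : M₄ *ᵥ (Dᴴ *ᵥ w) = 0 := keyA κ₄ Ω _ (fun m hm => h m (Or.inr hm))
      have z₃ : (D * M₃ * Dᴴ) *ᵥ w = 0 := by
        rw [mul_assoc, ← mulVec_mulVec, ← mulVec_mulVec, h₃, mulVec_zero]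
      have z₄ : (D * M₄ * Dᴴ) *ᵥ w = 0 := by
        rw [mul_assoc, ← mulVec_mulVec, ← mulVec_mulVec, h₄, mulVec_zero]
      rw [z₃, z₄]
      funext i; cases i <;> rfl
  have hrank := LinearMap.finrank_range_add_finrank_ker
    (Matrix.fromRows (D * M₃ * Dᴴ) (D * M₄ * Dᴴ)).mulVecLin
  rw [hker] at hrank
  have hcomap : Module.finrank ℂ
      (Submodule.comap (e : (Fin d → ℂ) →ₗ[ℂ] (Fin d → ℂ)) K) = Module.finrank ℂ K := by
    rw [Submodule.comap_equiv_eq_map_symm]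
    exact LinearEquiv.finrank_map_eq _ _
  rw [hcomap, Module.finrank_pi, Fintype.card_fin] at hrank
  show Module.finrank ℂ
    (LinearMap.range (Matrix.fromRows (D * M₃ * Dᴴ) (D * M₄ * Dᴴ)).mulVecLin) = _
  simp only [hp, Finset.filter_congr_decidable] at hcard ⊢
  omega
end
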